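/- arXiv:2404.07093 — 3 statements merged into one kernel-verified Lean document; each statement's English description precedes it below -/
import Mathlib

section
/- A ring R fails to satisfy the rank condition if and only if there is a positive integer n such that every finitely generated right R-module can be generated by n elements. -/
universe u

/-- A ring `R` satisfies the (right) rank condition if for all positive integers
`n < m` there is no surjective homomorphism of right `R`-modules `R^n → R^m`.
Right `R`-modules are treated as left modules over the opposite ring `Rᵐᵒᵖ`. -/
def RightRankCondition (R : Type u) [Ring R] : Prop :=
  ∀ n m : ℕ, 0 < n → n < m →
    ¬ ∃ f : (Fin n → Rᵐᵒᵖ) →ₗ[Rᵐᵒᵖ] (Fin m → Rᵐᵒᵖ), Function.Surjective f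

section Aux

variable {A : Type u} [Ring A]

/-- `A^(a+1) ≃ A^a × A^1`. -/
noncomputable def finSuccLEquiv (A : Type u) [Ring A] (a : ℕ) :
    (Fin (a + 1) → A) ≃ₗ[A] (Fin a → A) × (Fin 1 → A) :=
  (LinearEquiv.funCongrLeft A A finSumFinEquiv).trans
    (LinearEquiv.sumArrowLequivProdArrow _ _ A A)

lemma step_surj {n N : ℕ}
    (g : (Fin n → A) →ₗ[A] (Fin (n + 1) → A)) (hg : Function.Surjective g)
    (f : (Fin n → A) →ₗ[A] (Fin N → A)) (hf : Function.Surjective f) :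
    ∃ h : (Fin n → A) →ₗ[A] (Fin (N + 1) → A), Function.Surjective h := by
  refine ⟨(((finSuccLEquiv A N).symm.toLinearMap.comp
      ((f.prodMap (LinearMap.id : (Fin 1 → A) →ₗ[A] (Fin 1 → A))).comp
        (finSuccLEquiv A n).toLinearMap)).comp g), ?_⟩
  simp only [LinearMap.coe_comp, LinearEquiv.coe_coe]
  exact (((finSuccLEquiv A N).symm.surjective.comp
      ((hf.prodMap Function.surjective_id).comp
        (finSuccLEquiv A n).surjective)).comp hg)

lemma exists_surj_of_lt {n m : ℕ} (hnm : n < m)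
    (h : ∃ f : (Fin n → A) →ₗ[A] (Fin m → A), Function.Surjective f)
    (N : ℕ) : ∃ f : (Fin n → A) →ₗ[A] (Fin N → A), Function.Surjective f := by
  obtain ⟨f, hf⟩ := h
  -- a surjection `A^n ↠ A^(n+1)`
  have hg : ∃ g : (Fin n → A) →ₗ[A] (Fin (n + 1) → A), Function.Surjective g := by
    refine ⟨(LinearMap.funLeft A A (Fin.castLE hnm)).comp f, ?_⟩
    exact (LinearMap.funLeft_surjective_of_injective A A _
      (Fin.castLE_injective hnm)).comp hf
  obtain ⟨g, hgsurj⟩ := hg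
  have key : ∀ k : ℕ, ∃ f : (Fin n → A) →ₗ[A] (Fin (n + k) → A), Function.Surjective f := by
    intro k
    induction k with
    | zero => exact ⟨LinearMap.id, Function.surjective_id⟩
    | succ k ih =>
      obtain ⟨f', hf'⟩ := ih
      exact step_surj g hgsurj f' hf'
  rcases le_or_gt N n with hN | hN
  · exact ⟨LinearMap.funLeft A A (Fin.castLE hN), LinearMap.funLeft_surjective_of_injective
      A A _ (Fin.castLE_injective hN)⟩
  · obtain ⟨f', hf'⟩ := key (N - n)
    have e : N = n + (N - n) := (Nat.add_sub_cancel' hN.le).symm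
    refine ⟨(LinearMap.funLeft A A (Fin.cast e)).comp f', ?_⟩
    exact (LinearMap.funLeft_surjective_of_injective A A _
      (Fin.cast_injective e)).comp hf'

end Aux

/-- A ring `R` fails to satisfy the rank condition if and only if there is a positive
integer `n` such that every finitely generated right `R`-module can be generated by
`n` elements.  Right `R`-modules are treated as left `Rᵐᵒᵖ`-modules. -/
theorem statement5 (R : Type u) [Ring R] :
    ¬ RightRankCondition R ↔
      ∃ n : ℕ, 0 < n ∧
        ∀ (M : Type u) [AddCommGroup M] [Module Rᵐᵒᵖ M], Module.Finite Rᵐᵒᵖ M →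
          ∃ s : Finset M, s.card ≤ n ∧ Submodule.span Rᵐᵒᵖ (s : Set M) = ⊤ := by
  constructor
  · intro hnot
    unfold RightRankCondition at hnot
    push_neg at hnot
    obtain ⟨n, m, hn, hnm, hf⟩ := hnot
    refine ⟨n, hn, ?_⟩
    intro M _ _ hM
    obtain ⟨s, hs⟩ := hM.fg_top
    classical
    -- spanning map `A^(s.card) ↠ M`
    set v : Fin s.card → M := fun i => ((s.equivFin.symm i : s) : M) with hv
    have hrange : Set.range v = (s : Set M) := by
      ext x
      constructor
      · rintro ⟨i, rfl⟩; exact (s.equivFin.symm i).2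
      · intro hx; exact ⟨s.equivFin ⟨x, hx⟩, by simp [hv]⟩
    set π := Fintype.linearCombination Rᵐᵒᵖ v with hπ
    have hπs : Function.Surjective π := by
      rw [← LinearMap.range_eq_top, hπ, Fintype.range_linearCombination, hrange, hs]
    obtain ⟨g, hg⟩ := exists_surj_of_lt hnm hf s.card
    have hcs : Function.Surjective (π.comp g) := hπs.comp hg
    refine ⟨Finset.univ.image fun i : Fin n => (π.comp g) ((Pi.basisFun Rᵐᵒᵖ (Fin n)) i),
      ?_, ?_⟩
    · exact (Finset.card_image_le).trans (by simp)
    · have heq : (Set.range fun i => (π.comp g) ((Pi.basisFun Rᵐᵒᵖ (Fin n)) i)) =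
          (π.comp g) '' Set.range (Pi.basisFun Rᵐᵒᵖ (Fin n)) := by
        rw [← Set.range_comp]; rfl
      rw [Finset.coe_image, Finset.coe_univ, Set.image_univ, heq,
        Submodule.span_image, Module.Basis.span_eq, Submodule.map_top, LinearMap.range_eq_top]
      exact hcs
  · rintro ⟨n, hn, H⟩ hRRC
    classical
    obtain ⟨s, hcard, hspan⟩ := H (Fin (n + 1) → Rᵐᵒᵖ) inferInstance
    set v : Fin n → (Fin (n + 1) → Rᵐᵒᵖ) := fun i =>
      if h : (i : ℕ) < s.card then ((s.equivFin.symm ⟨i, h⟩ : s) : _) else 0 with hv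
    have hsub : (s : Set (Fin (n + 1) → Rᵐᵒᵖ)) ⊆ Set.range v := by
      intro x hx
      set j := s.equivFin ⟨x, hx⟩ with hj
      have hjn : (j : ℕ) < n := lt_of_lt_of_le j.isLt hcard
      refine ⟨⟨j, hjn⟩, ?_⟩
      simp only [hv]
      rw [dif_pos (show ((⟨(j : ℕ), hjn⟩ : Fin n) : ℕ) < s.card from j.isLt)]
      have : (⟨(j : ℕ), j.isLt⟩ : Fin s.card) = j := Fin.eta j j.isLt
      rw [this, hj, Equiv.symm_apply_apply]
    have hspanv : Submodule.span Rᵐᵒᵖ (Set.range v) = ⊤ :=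
      top_unique (hspan ▸ Submodule.span_mono hsub)
    have hsurj : Function.Surjective (Fintype.linearCombination Rᵐᵒᵖ v) := by
      rw [← LinearMap.range_eq_top, Fintype.range_linearCombination, hspanv]
    exact hRRC n (n + 1) hn (Nat.lt_succ_self n) ⟨_, hsurj⟩
end

section
/- Let R be a ring that fails to satisfy the rank condition. Then the generating number gn(R) equals the smallest positive integer n such that every finitely generated right R-module can be generated by n elements. -/
universe u

/-- If a ring `R` fails the rank condition, its generating number `gn(R)` is the
smallest positive integer `n` such that there is a surjective homomorphism of right
`R`-modules `R^n → R^(n+1)`. -/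
noncomputable def generatingNumber (R : Type u) [Ring R] : ℕ :=
  sInf {n : ℕ | 0 < n ∧
    ∃ f : (Fin n → Rᵐᵒᵖ) →ₗ[Rᵐᵒᵖ] (Fin (n + 1) → Rᵐᵒᵖ), Function.Surjective f}


open Function Submodule

section Aux

variable {A : Type u} [Ring A]

/-- a generating family of size ≤ n gives a surjection from A^n -/
lemma aux_surj_of_span {M : Type u} [AddCommGroup M] [Module A M] {n : ℕ}
    (s : Finset M) (hcard : s.card ≤ n) (hspan : Submodule.span A (s : Set M) = ⊤) :
    ∃ f : (Fin n → A) →ₗ[A] M, Surjective f := by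
  classical
  set l := s.toList with hl
  have hlen : l.length = s.card := s.length_toList
  set v : Fin n → M := fun i => l.getD i 0 with hv
  have hsub : (s : Set M) ⊆ Set.range v := by
    intro x hx
    have hmem : x ∈ l := by simpa [hl] using (s.mem_toList).2 hx
    obtain ⟨i, hi, hget⟩ := List.getElem_of_mem hmem
    refine ⟨⟨i, lt_of_lt_of_le (hlen ▸ hi) hcard⟩, ?_⟩
    show l.getD i 0 = x
    rw [List.getD_eq_getElem l 0 hi]
    exact hget
  have hspanv : Submodule.span A (Set.range v) = ⊤ :=
    top_unique (hspan ▸ Submodule.span_mono hsub)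
  refine ⟨(Finsupp.linearCombination A v).comp
    (Finsupp.linearEquivFunOnFinite A A (Fin n)).symm.toLinearMap, ?_⟩
  rw [← LinearMap.range_eq_top, LinearMap.range_comp, LinearEquiv.range,
    Submodule.map_top, Finsupp.range_linearCombination, hspanv]

lemma aux_span_of_surj {M : Type u} [AddCommGroup M] [Module A M] {n : ℕ}
    (f : (Fin n → A) →ₗ[A] M) (hf : Surjective f) :
    ∃ s : Finset M, s.card ≤ n ∧ Submodule.span A (s : Set M) = ⊤ := by
  classical
  refine ⟨Finset.image (fun i => f (Pi.single i 1)) Finset.univ, ?_, ?_⟩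
  · exact (Finset.card_image_le).trans (by simp)
  · have hb : Submodule.span A (Set.range (Pi.basisFun A (Fin n))) = ⊤ :=
      (Pi.basisFun A (Fin n)).span_eq
    have : (↑(Finset.image (fun i => f (Pi.single i 1)) Finset.univ) : Set M)
        = f '' Set.range (Pi.basisFun A (Fin n)) := by
      ext x
      simp [Set.range_comp, Pi.basisFun_apply, Set.image_image]
    rw [this, ← Submodule.map_span, hb, Submodule.map_top, LinearMap.range_eq_top.2 hf]

/-- the product decomposition -/
noncomputable def auxE (a b : ℕ) : (Fin (a + b) → A) ≃ₗ[A] (Fin a → A) × (Fin b → A) :=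
  (LinearEquiv.funCongrLeft A A finSumFinEquiv).trans
    (LinearEquiv.sumArrowLequivProdArrow (Fin a) (Fin b) A A)

lemma aux_step {g k : ℕ} (f : (Fin g → A) →ₗ[A] (Fin (g + 1) → A)) (hf : Surjective f) :
    ∃ F : (Fin (g + k) → A) →ₗ[A] (Fin (g + k + 1) → A), Surjective F := by
  classical
  let e : Fin (g + k + 1) ≃ Fin (g + 1 + k) := finCongr (by omega)
  refine ⟨(LinearMap.funLeft A A e).comp
      (((auxE (g+1) k).symm.toLinearMap.comp
        ((f.prodMap (LinearMap.id)).comp (auxE g k).toLinearMap))), ?_⟩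
  simp only [LinearMap.coe_comp, LinearEquiv.coe_coe, LinearMap.coe_prodMap, LinearMap.id_coe]
  exact (LinearMap.funLeft_surjective_of_injective A A e e.injective).comp
    (((auxE (g+1) k).symm.surjective).comp
      ((hf.prodMap surjective_id).comp (auxE g k).surjective))

lemma aux_tower {g : ℕ} (f : (Fin g → A) →ₗ[A] (Fin (g + 1) → A)) (hf : Surjective f)
    {m : ℕ} (hm : g ≤ m) :
    ∃ F : (Fin g → A) →ₗ[A] (Fin m → A), Surjective F := by
  have key : ∀ k : ℕ, ∃ F : (Fin g → A) →ₗ[A] (Fin (g + k) → A), Surjective F := by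
    intro k
    induction k with
    | zero => exact ⟨LinearMap.id, surjective_id⟩
    | succ k ih =>
      obtain ⟨F, hF⟩ := ih
      obtain ⟨G, hG⟩ := aux_step f hf (k := k)
      exact ⟨G.comp F, hG.comp hF⟩
  obtain ⟨F, hF⟩ := key (m - g)
  have hmg : g + (m - g) = m := by omega
  let e : Fin m ≃ Fin (g + (m - g)) := finCongr hmg.symm
  exact ⟨(LinearMap.funLeft A A e).comp F,
    ((LinearMap.funLeft_surjective_of_injective A A e e.injective)).comp hF⟩

end Aux

theorem statement7' (R : Type u) [Ring R]
    (hR : ¬ (∀ n m : ℕ, 0 < n → n < m →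
      ¬ ∃ f : (Fin n → Rᵐᵒᵖ) →ₗ[Rᵐᵒᵖ] (Fin m → Rᵐᵒᵖ), Function.Surjective f)) :
    sInf {n : ℕ | 0 < n ∧
      ∃ f : (Fin n → Rᵐᵒᵖ) →ₗ[Rᵐᵒᵖ] (Fin (n + 1) → Rᵐᵒᵖ), Function.Surjective f} =
      sInf {n : ℕ | 0 < n ∧
        ∀ (M : Type u) [AddCommGroup M] [Module Rᵐᵒᵖ M], Module.Finite Rᵐᵒᵖ M →
          ∃ s : Finset M, s.card ≤ n ∧ Submodule.span Rᵐᵒᵖ (s : Set M) = ⊤} := by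
  classical
  set A := Rᵐᵒᵖ
  set SA := {n : ℕ | 0 < n ∧
    ∃ f : (Fin n → A) →ₗ[A] (Fin (n + 1) → A), Function.Surjective f} with hSA
  set SB := {n : ℕ | 0 < n ∧
    ∀ (M : Type u) [AddCommGroup M] [Module A M], Module.Finite A M →
      ∃ s : Finset M, s.card ≤ n ∧ Submodule.span A (s : Set M) = ⊤} with hSB
  push_neg at hR
  obtain ⟨n, m, hn, hnm, f, hf⟩ := hR
  have hSAne : SA.Nonempty := by
    refine ⟨n, hn, (LinearMap.funLeft A A (Fin.castLE hnm)).comp f, ?_⟩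
    exact (LinearMap.funLeft_surjective_of_injective A A _ (Fin.castLE_injective hnm)).comp hf
  have hg := Nat.sInf_mem hSAne
  set g := sInf SA with hgdef
  obtain ⟨hgpos, F0, hF0⟩ := hg
  have hgB : g ∈ SB := by
    refine ⟨hgpos, ?_⟩
    intro M _ _ hfin
    obtain ⟨t, ht⟩ := hfin.fg_top
    by_cases hc : t.card ≤ g
    · exact ⟨t, hc, ht⟩
    · obtain ⟨ψ, hψ⟩ := aux_surj_of_span t le_rfl ht
      obtain ⟨φ, hφ⟩ := aux_tower F0 hF0 (le_of_lt (not_le.1 hc))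
      exact aux_span_of_surj (ψ.comp φ) (hψ.comp hφ)
  refine le_antisymm ?_ (Nat.sInf_le hgB)
  refine le_csInf ⟨g, hgB⟩ ?_
  rintro b ⟨hbpos, hb⟩
  obtain ⟨s, hcard, hspan⟩ := hb (Fin (b + 1) → A) inferInstance
  obtain ⟨f', hf'⟩ := aux_surj_of_span s hcard hspan
  exact Nat.sInf_le ⟨hbpos, f', hf'⟩

/-- Let `R` be a ring that fails to satisfy the rank condition.  Then the generating
number `gn(R)` equals the smallest positive integer `n` such that every finitely
generated right `R`-module can be generated by `n` elements. -/
theorem statement7 (R : Type u) [Ring R] (hR : ¬ RightRankCondition R) :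
    generatingNumber R =
      sInf {n : ℕ | 0 < n ∧
        ∀ (M : Type u) [AddCommGroup M] [Module Rᵐᵒᵖ M], Module.Finite Rᵐᵒᵖ M →
          ∃ s : Finset M, s.card ≤ n ∧ Submodule.span Rᵐᵒᵖ (s : Set M) = ⊤} := by
  rw [generatingNumber]
  exact statement7' R hR
end

section
/- A ring R satisfies the strong rank condition if and only if, for every progenerator P of the category of right R-modules and all positive integers m and n, the existence of an injective homomorphism of right R-modules P^n → P^m implies n ≤ m. -/
universe u

open Function

section Aux

variable {S : Type u} [Ring S]

/-- Existence of a linear embedding. -/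
def LEmb (S : Type u) [Ring S] (M N : Type u) [AddCommGroup M] [Module S M]
    [AddCommGroup N] [Module S N] : Prop :=
  ∃ f : M →ₗ[S] N, Function.Injective f

variable {M N K : Type u} [AddCommGroup M] [Module S M] [AddCommGroup N] [Module S N]
  [AddCommGroup K] [Module S K]

lemma LEmb.trans (h1 : LEmb S M N) (h2 : LEmb S N K) : LEmb S M K := by
  obtain ⟨f, hf⟩ := h1; obtain ⟨g, hg⟩ := h2
  exact ⟨g.comp f, hg.comp hf⟩

lemma LEmb.of_equiv (e : M ≃ₗ[S] N) : LEmb S M N := ⟨e, e.injective⟩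

lemma LEmb.compLeft (h : LEmb S M N) (a : ℕ) : LEmb S (Fin a → M) (Fin a → N) := by
  obtain ⟨f, hf⟩ := h
  exact ⟨f.compLeft (Fin a), fun x y hxy => funext fun i => hf (congrFun hxy i)⟩

variable {P : Type u} [AddCommGroup P] [Module S P]

/-- `(Fin a → Fin b → P) ≃ₗ (Fin (a*b) → P)` -/
noncomputable def powPowEquiv (S : Type u) [Ring S] (P : Type u) [AddCommGroup P] [Module S P]
    (a b : ℕ) : (Fin a → Fin b → P) ≃ₗ[S] (Fin (a * b) → P) :=
  (LinearEquiv.curry S P (Fin a) (Fin b)).symm.trans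
    (LinearEquiv.funCongrLeft S P finProdFinEquiv.symm)

lemma LEmb.mul {n m : ℕ} (h : LEmb S (Fin n → P) (Fin m → P)) (a : ℕ) :
    LEmb S (Fin (a * n) → P) (Fin (a * m) → P) :=
  (LEmb.of_equiv (powPowEquiv S P a n).symm).trans
    ((h.compLeft a).trans (LEmb.of_equiv (powPowEquiv S P a m)))

lemma LEmb.congr {a b a' b' : ℕ} (ha : a = a') (hb : b = b')
    (h : LEmb S (Fin a → P) (Fin b → P)) : LEmb S (Fin a' → P) (Fin b' → P) := ha ▸ hb ▸ h

lemma LEmb.pow {n m : ℕ} (h : LEmb S (Fin n → P) (Fin m → P)) (t : ℕ) :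
    LEmb S (Fin (n ^ t) → P) (Fin (m ^ t) → P) := by
  induction t with
  | zero => exact LEmb.congr (pow_zero n).symm (pow_zero m).symm (LEmb.of_equiv (LinearEquiv.refl S (Fin 1 → P)))
  | succ t ih =>
    have h1 : LEmb S (Fin (n ^ t * n) → P) (Fin (n ^ t * m) → P) := h.mul (n ^ t)
    have h2 : LEmb S (Fin (m * n ^ t) → P) (Fin (m * m ^ t) → P) := ih.mul m
    exact (h1.trans (h2.congr (mul_comm _ _) rfl)).congr (pow_succ n t).symm (pow_succ' m t).symm

lemma nat_pow_aux {m n : ℕ} (hmn : m < n) (t : ℕ) :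
    m ^ (t + 1) + (t + 1) * m ^ t ≤ n ^ (t + 1) := by
  induction t with
  | zero => simpa using hmn
  | succ t ih =>
    have h1 : n ^ (t + 2) = n * n ^ (t + 1) := by ring
    have h2 : n * n ^ (t + 1) ≥ (m + 1) * (m ^ (t + 1) + (t + 1) * m ^ t) := by
      apply Nat.mul_le_mul hmn ih
    have h3 : m ^ (t + 2) + (t + 2) * m ^ (t + 1) ≤ (m + 1) * (m ^ (t + 1) + (t + 1) * m ^ t) := by
      have e1 : m ^ (t + 1) = m ^ t * m := pow_succ m t
      have e2 : m ^ (t + 2) = m ^ t * m * m := by rw [pow_succ, pow_succ]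
      rw [e1, e2]
      nlinarith [Nat.zero_le (m ^ t)]
    show m ^ (t + 2) + (t + 2) * m ^ (t + 1) ≤ n ^ (t + 2)
    rw [h1]
    exact le_trans h3 h2

end Aux

/-- A ring `R` satisfies the (right) strong rank condition if for all positive integers
`m < n` there is no injective homomorphism of right `R`-modules `R^n → R^m`.
Right `R`-modules are treated as left modules over the opposite ring `Rᵐᵒᵖ`. -/
def RightStrongRankCondition (R : Type u) [Ring R] : Prop :=
  ∀ m n : ℕ, 0 < m → m < n →
    ¬ ∃ f : (Fin n → Rᵐᵒᵖ) →ₗ[Rᵐᵒᵖ] (Fin m → Rᵐᵒᵖ), Function.Injective f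

/-- A progenerator of the category of right `R`-modules (treated as left `Rᵐᵒᵖ`-modules)
is a finitely generated projective right `R`-module `P` such that the right `R`-module
`R` (i.e. `Rᵐᵒᵖ` as a left `Rᵐᵒᵖ`-module) is isomorphic to a direct summand of `P^l`
for some positive integer `l`. -/
def IsProgenerator (R : Type u) [Ring R] (P : Type u) [AddCommGroup P]
    [Module Rᵐᵒᵖ P] : Prop :=
  Module.Finite Rᵐᵒᵖ P ∧ Module.Projective Rᵐᵒᵖ P ∧
    ∃ l : ℕ, 0 < l ∧
      ∃ (f : Rᵐᵒᵖ →ₗ[Rᵐᵒᵖ] (Fin l → P)) (g : (Fin l → P) →ₗ[Rᵐᵒᵖ] Rᵐᵒᵖ),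
        g.comp f = LinearMap.id

/-- A ring `R` satisfies the strong rank condition if and only if, for every progenerator
`P` of the category of right `R`-modules and all positive integers `m` and `n`, the
existence of an injective homomorphism of right `R`-modules `P^n → P^m` implies
`n ≤ m`. -/
theorem statement11 (R : Type u) [Ring R] :
    RightStrongRankCondition R ↔
      ∀ (P : Type u) [AddCommGroup P] [Module Rᵐᵒᵖ P], IsProgenerator R P →
        ∀ m n : ℕ, 0 < m → 0 < n →
          (∃ f : (Fin n → P) →ₗ[Rᵐᵒᵖ] (Fin m → P), Function.Injective f) → n ≤ m := by
  constructor
  · intro hsrc P _ _ hP m n hm hn hf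
    by_contra hcon
    push_neg at hcon
    obtain ⟨hfin, hproj, l, hl, i, g, hgi⟩ := hP
    have hi : Function.Injective i := LinearMap.injective_of_comp_eq_id i g hgi
    obtain ⟨k, π, j, hπ, hj, hcomp⟩ :=
      Module.Finite.exists_comp_eq_id_of_projective Rᵐᵒᵖ P
    rcases Nat.eq_zero_or_pos k with hk | hk
    · -- k = 0 : P is a subsingleton, hence so is Rᵐᵒᵖ; contradiction with hsrc 1 2
      subst hk
      have hPsub : Subsingleton P := by
        constructor; intro x y
        exact hj (Subsingleton.elim _ _)
      have hSsub : Subsingleton Rᵐᵒᵖ := by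
        constructor; intro x y
        exact hi (Subsingleton.elim _ _)
      exact hsrc 1 2 one_pos one_lt_two ⟨0, Function.injective_of_subsingleton _⟩
    · set t := k * l * m with ht
      obtain ⟨s, hs⟩ : ∃ s, t = s + 1 :=
        ⟨t - 1, (Nat.succ_pred_eq_of_pos (by positivity)).symm⟩
      -- the chain of embeddings
      have hSP : LEmb Rᵐᵒᵖ Rᵐᵒᵖ (Fin l → P) := ⟨i, hi⟩
      have hPS : LEmb Rᵐᵒᵖ P (Fin k → Rᵐᵒᵖ) := ⟨j, hj⟩
      have htf : LEmb Rᵐᵒᵖ (Fin (n ^ t) → P) (Fin (m ^ t) → P) := LEmb.pow hf t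
      have e1 : LEmb Rᵐᵒᵖ (Fin (n ^ t) → Rᵐᵒᵖ) (Fin (n ^ t * l) → P) :=
        (hSP.compLeft (n ^ t)).trans (LEmb.of_equiv (powPowEquiv Rᵐᵒᵖ P (n ^ t) l))
      have e2 : LEmb Rᵐᵒᵖ (Fin (n ^ t * l) → P) (Fin (l * m ^ t) → P) :=
        (htf.mul l).congr (mul_comm l (n ^ t)) rfl
      have e3 : LEmb Rᵐᵒᵖ (Fin (l * m ^ t) → P) (Fin (l * m ^ t * k) → Rᵐᵒᵖ) :=
        (hPS.compLeft (l * m ^ t)).trans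
          (LEmb.of_equiv (powPowEquiv Rᵐᵒᵖ Rᵐᵒᵖ (l * m ^ t) k))
      have efin : LEmb Rᵐᵒᵖ (Fin (n ^ t) → Rᵐᵒᵖ) (Fin (l * m ^ t * k) → Rᵐᵒᵖ) :=
        (e1.trans e2).trans e3
      -- numerical contradiction
      have hmt : m ^ t = m ^ s * m := by rw [hs, pow_succ]
      have hcount : l * m ^ t * k = t * m ^ s := by rw [hmt, ht]; ring
      have hineq : l * m ^ t * k < n ^ t := by
        have := nat_pow_aux hcon s
        rw [← hs] at this
        rw [hcount]
        linarith [pow_pos hm t, hcount]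
      exact hsrc (l * m ^ t * k) (n ^ t) (by positivity) hineq efin
  · intro h m n hm hmn hf
    have hgen : IsProgenerator R Rᵐᵒᵖ := by
      refine ⟨inferInstance, inferInstance, 1, one_pos,
        LinearMap.pi (fun _ => LinearMap.id), LinearMap.proj 0, ?_⟩
      rfl
    have := h Rᵐᵒᵖ hgen m n hm (hm.trans hmn) hf
    omega
end
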